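/- Let n ≥ 2 be an integer. The affine hypersurface {(z₁,z₂,z₃,z₄) ∈ ℂ⁴ : z₁z₂z₃ − z₄ⁿ = z₁² + z₂² + z₃² + 1} is smooth: at every point of it, at least one of the four partial derivatives z₂z₃ − 2z₁, z₁z₃ − 2z₂, z₁z₂ − 2z₃, n z₄^{n−1} of the defining polynomial z₁z₂z₃ − z₄ⁿ − z₁² − z₂² − z₃² − 1 is nonzero. -/
import Mathlib


/-- For `n ≥ 2`, the hypersurface `{z₁z₂z₃ − z₄ⁿ = z₁² + z₂² + z₃² + 1}` is smooth: at
each of its points at least one of the partial derivatives `z₂z₃ − 2z₁`, `z₁z₃ − 2z₂`,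
`z₁z₂ − 2z₃`, `n z₄^{n−1}` is nonzero. -/
theorem stmt15 (n : ℕ) (hn : 2 ≤ n) :
    ∀ z₁ z₂ z₃ z₄ : ℂ,
      z₁ * z₂ * z₃ - z₄ ^ n = z₁ ^ 2 + z₂ ^ 2 + z₃ ^ 2 + 1 →
        (z₂ * z₃ - 2 * z₁ ≠ 0 ∨ z₁ * z₃ - 2 * z₂ ≠ 0 ∨ z₁ * z₂ - 2 * z₃ ≠ 0 ∨
          (n : ℂ) * z₄ ^ (n - 1) ≠ 0) := by
  intro z₁ z₂ z₃ z₄ heq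
  by_contra hcon
  push_neg at hcon
  obtain ⟨h1, h2, h3, h4⟩ := hcon
  -- from h4: z₄ = 0
  have hn0 : (n : ℂ) ≠ 0 := by
    have : 0 < n := by omega
    exact_mod_cast this.ne'
  have hz4 : z₄ = 0 := by
    have hp : z₄ ^ (n - 1) = 0 := by
      rcases mul_eq_zero.mp h4 with h | h
      · exact absurd h hn0
      · exact h
    exact pow_eq_zero_iff (by omega) |>.mp hp
  have hzn : z₄ ^ n = 0 := by
    rw [hz4]; exact zero_pow (by omega)
  have e : z₁ * z₂ * z₃ = z₁ ^ 2 + z₂ ^ 2 + z₃ ^ 2 + 1 := by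
    rw [hzn] at heq; linear_combination heq
  have t1 : z₁ * z₂ * z₃ = 2 * z₁ ^ 2 := by linear_combination z₁ * h1
  have t2 : z₁ * z₂ * z₃ = 2 * z₂ ^ 2 := by linear_combination z₂ * h2
  have t3 : z₁ * z₂ * z₃ = 2 * z₃ ^ 2 := by linear_combination z₃ * h3
  have hA : z₁ ^ 2 = -1 := by linear_combination -e + (1/2) * t2 + (1/2) * t3
  have hB : z₂ ^ 2 = -1 := by linear_combination -e + (1/2) * t1 + (1/2) * t3
  have hC : z₃ ^ 2 = -1 := by linear_combination -e + (1/2) * t1 + (1/2) * t2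
  have hP : z₁ * z₂ * z₃ = -2 := by linear_combination t1 + 2 * hA
  have contra : (5 : ℂ) = 0 := by
    linear_combination (2 - z₁ * z₂ * z₃) * hP + (z₂ ^ 2 * z₃ ^ 2) * hA - z₃ ^ 2 * hB + hC
  norm_num at contra
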